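/- Let Θ ⊆ ℝ^d have empty interior. Assume that for all x, y ∈ ℝ^d \ Θ and all δ > 0 there exists a path γ in ℝ^d connecting x and y with ℓ(γ) < ‖y − x‖ + δ and (image γ) ∩ Θ = ∅. Then Θ is null permeable. -/

import Mathlib

open Set
open scoped ENNReal

/-- The length (total variation w.r.t. the Euclidean norm) of a path `γ` over `[a,b]`,
as the supremum over partitions `a = t₀ ≤ t₁ ≤ … ≤ tₙ = b` of the sums of norms of
increments. -/
noncomputable def pathLen {d : ℕ} (γ : ℝ → EuclideanSpace ℝ (Fin d)) (a b : ℝ) : ℝ≥0∞ :=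
  ⨆ n : ℕ, ⨆ t : {t : ℕ → ℝ // Monotone t ∧ t 0 = a ∧ t n = b},
    ∑ i ∈ Finset.range n, ENNReal.ofReal ‖γ (t.1 (i + 1)) - γ (t.1 i)‖

/-- A set `Θ ⊆ ℝ^d` is null permeable (w.r.t. the Euclidean norm) if any two points
`x, y` can be joined, for every `δ > 0`, by a path of length at most `‖y - x‖ + δ`
whose image meets `Θ` at most in `{x, y}`. -/
def NullPermeable {d : ℕ} (Θ : Set (EuclideanSpace ℝ (Fin d))) : Prop :=
  ∀ x y : EuclideanSpace ℝ (Fin d), ∀ δ : ℝ, 0 < δ →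
    ∃ (a b : ℝ) (γ : ℝ → EuclideanSpace ℝ (Fin d)),
      a < b ∧ ContinuousOn γ (Set.Icc a b) ∧ γ a = x ∧ γ b = y ∧
      pathLen γ a b ≤ ENNReal.ofReal (‖y - x‖ + δ) ∧
      γ '' Set.Icc a b ∩ Θ ⊆ {x, y}


open Function

section Helpers


variable {E : Type*} [PseudoEMetricSpace E]

private lemma continuousOn_union_closed {X Y : Type*} [TopologicalSpace X] [TopologicalSpace Y]
    {f : X → Y} {s t : Set X} (hs : IsClosed s) (ht : IsClosed t)
    (hfs : ContinuousOn f s) (hft : ContinuousOn f t) : ContinuousOn f (s ∪ t) := by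
  intro z hz
  by_cases hzs : z ∈ s <;> by_cases hzt : z ∈ t
  · exact (hfs z hzs).union (hft z hzt)
  · refine (hfs z hzs).mono_of_mem_nhdsWithin ?_
    rw [mem_nhdsWithin]
    exact ⟨tᶜ, ht.isOpen_compl, hzt, fun w hw => hw.2.resolve_right hw.1⟩
  · refine (hft z hzt).mono_of_mem_nhdsWithin ?_
    rw [mem_nhdsWithin]
    exact ⟨sᶜ, hs.isOpen_compl, hzs, fun w hw => hw.2.resolve_left hw.1⟩
  · exact absurd hz (by simp [hzs, hzt])

private lemma icc_add (f : ℝ → E) {a b c : ℝ} (hab : a ≤ b) (hbc : b ≤ c) :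
    eVariationOn f (Icc a b) + eVariationOn f (Icc b c) = eVariationOn f (Icc a c) := by
  simpa using eVariationOn.Icc_add_Icc f (s := univ) hab hbc (mem_univ b)

private lemma evar_le_add (f : ℝ → E) {a b : ℝ} (C S : ℝ≥0∞)
    (hC : ∀ t ∈ Ioc a b, edist (f a) (f t) ≤ C)
    (hS : ∀ s ∈ Ioc a b, eVariationOn f (Icc s b) ≤ S) :
    eVariationOn f (Icc a b) ≤ C + S := by
  refine iSup_le ?_
  rintro ⟨n, u, hu, us⟩
  dsimp only
  by_cases h0 : a < u 0
  · calc ∑ i ∈ Finset.range n, edist (f (u (i + 1))) (f (u i))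
        ≤ eVariationOn f (Icc (u 0) b) :=
          eVariationOn.sum_le (f := f) (n := n) hu (fun i => ⟨hu (Nat.zero_le i), (us i).2⟩)
      _ ≤ S := hS (u 0) ⟨h0, (us 0).2⟩
      _ ≤ C + S := le_add_self
  · push_neg at h0
    classical
    set j := Nat.findGreatest (fun i => u i ≤ a) n with hj
    have hPj : u j ≤ a := Nat.findGreatest_spec (P := fun i => u i ≤ a) (Nat.zero_le n) h0
    have hjn : j ≤ n := Nat.findGreatest_le (P := fun i => u i ≤ a) n
    have huj : u j = a := le_antisymm hPj (us j).1
    have hzero : ∀ i < j, edist (f (u (i + 1))) (f (u i)) = 0 := by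
      intro i hi
      have h1 : u (i + 1) = a := le_antisymm ((hu (by omega : i + 1 ≤ j)).trans hPj) (us _).1
      have h2 : u i = a := le_antisymm ((hu (by omega : i ≤ j)).trans hPj) (us _).1
      rw [h1, h2, edist_self]
    rcases eq_or_lt_of_le hjn with hje | hjln
    · have : ∑ i ∈ Finset.range n, edist (f (u (i + 1))) (f (u i)) = 0 :=
        Finset.sum_eq_zero fun i hi => hzero i (by rw [hje]; exact Finset.mem_range.mp hi)
      simp [this]
    · have hgt : ∀ i, j < i → i ≤ n → a < u i := fun i h1 h2 =>
        lt_of_not_ge (Nat.findGreatest_is_greatest (P := fun i => u i ≤ a) h1 h2)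
    -- split the sum
      have hsplit : ∑ i ∈ Finset.range n, edist (f (u (i + 1))) (f (u i))
          = (∑ i ∈ Finset.range j, edist (f (u (i + 1))) (f (u i)))
            + ((edist (f (u (j + 1))) (f (u j)))
              + ∑ i ∈ Finset.Ico (j + 1) n, edist (f (u (i + 1))) (f (u i))) := by
        rw [Finset.range_eq_Ico, ← Finset.sum_Ico_consecutive _ (Nat.zero_le j) hjln.le,
          Finset.sum_eq_sum_Ico_succ_bot hjln, ← Finset.range_eq_Ico]
      rw [hsplit]
      have hz : ∑ i ∈ Finset.range j, edist (f (u (i + 1))) (f (u i)) = 0 :=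
        Finset.sum_eq_zero fun i hi => hzero i (Finset.mem_range.mp hi)
      rw [hz, zero_add]
      refine add_le_add ?_ ?_
      · rw [huj, edist_comm]
        exact hC (u (j + 1)) ⟨hgt _ (Nat.lt_succ_self j) hjln, (us _).2⟩
      · rw [Finset.sum_Ico_eq_sum_range]
        have hsum := eVariationOn.sum_le (f := f) (n := n - (j + 1)) (u := fun i => u (j + 1 + i))
          (fun p q pq => hu (by omega)) (fun i => mem_Icc.mpr ⟨hu (Nat.le_add_right _ _), (us _).2⟩)
        refine le_trans (le_of_eq ?_) (hsum.trans (hS (u (j + 1)) ⟨hgt _ (Nat.lt_succ_self j) hjln, (us _).2⟩))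
        refine Finset.sum_congr rfl fun i _ => ?_
        congr 3 <;> omega

end Helpers

/-- Affine map sending `[c,d]` to `[a,b]`. -/
noncomputable def affJ (a b c d : ℝ) : ℝ → ℝ := fun t => a + (t - c) * ((b - a) / (d - c))

section AffJ

variable {a b c d : ℝ}

lemma affJ_left : affJ a b c d c = a := by simp [affJ]

lemma affJ_right (hab : c ≠ d) : affJ a b c d d = b := by
  have : d - c ≠ 0 := sub_ne_zero.mpr hab.symm
  simp only [affJ]
  rw [mul_div_assoc', mul_div_cancel_left₀ _ this]
  ring

lemma affJ_monotone (hab : a ≤ b) (hcd : c < d) : Monotone (affJ a b c d) := by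
  intro s t hst
  have hk : 0 ≤ (b - a) / (d - c) := div_nonneg (by linarith) (by linarith)
  simp only [affJ]
  nlinarith

lemma affJ_continuous : Continuous (affJ a b c d) := by
  unfold affJ; fun_prop

lemma affJ_image (hab : a < b) (hcd : c < d) : affJ a b c d '' Icc c d = Icc a b := by
  have hk : 0 < (b - a) / (d - c) := div_pos (by linarith) (by linarith)
  have he : affJ a b c d = fun t => (b - a) / (d - c) * t + (a - c * ((b - a) / (d - c))) := by
    funext t; simp [affJ]; ring
  have hdc : d - c ≠ 0 := by intro hh; rw [hh] at hk; simp at hk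
  have h1 : (b - a) / (d - c) * c + (a - c * ((b - a) / (d - c))) = a := by ring
  have h2 : (b - a) / (d - c) * d + (a - c * ((b - a) / (d - c))) = b := by
    field_simp
    ring
  rw [he, image_affine_Icc' hk, h1, h2]

lemma affJ_mapsTo (hab : a < b) (hcd : c < d) : MapsTo (affJ a b c d) (Icc c d) (Icc a b) := by
  rw [← affJ_image hab hcd]; exact mapsTo_image _ _

end AffJ

section AffJE

variable {E : Type*} [PseudoEMetricSpace E] {a b c d : ℝ}

lemma affJ_eVar (g : ℝ → E) (hab : a < b) (hcd : c < d) :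
    eVariationOn (g ∘ affJ a b c d) (Icc c d) = eVariationOn g (Icc a b) := by
  rw [eVariationOn.comp_eq_of_monotoneOn g _ ((affJ_monotone hab.le hcd).monotoneOn _),
    affJ_image hab hcd]

lemma affJ_image_comp (g : ℝ → E) (hab : a < b) (hcd : c < d) :
    (g ∘ affJ a b c d) '' Icc c d = g '' Icc a b := by
  rw [image_comp, affJ_image hab hcd]

lemma affJ_contOn (g : ℝ → E) (hab : a < b) (hcd : c < d) (hg : ContinuousOn g (Icc a b)) :
    ContinuousOn (g ∘ affJ a b c d) (Icc c d) :=
  hg.comp affJ_continuous.continuousOn (affJ_mapsTo hab hcd)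

end AffJE

lemma pathLen_eq {d : ℕ} (γ : ℝ → EuclideanSpace ℝ (Fin d)) {a b : ℝ} (hab : a ≤ b) :
    pathLen γ a b = eVariationOn γ (Icc a b) := by
  have hterm : ∀ p q : EuclideanSpace ℝ (Fin d), ENNReal.ofReal ‖p - q‖ = edist p q := by
    intro p q; rw [edist_dist, dist_eq_norm]
  apply le_antisymm
  · refine iSup_le fun n => iSup_le ?_
    rintro ⟨t, ht, ht0, htn⟩
    have hmem : ∀ i, t (min i n) ∈ Icc a b := fun i =>
      mem_Icc.mpr ⟨ht0 ▸ ht (Nat.zero_le _), htn ▸ ht (min_le_right i n)⟩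
    refine le_trans (le_of_eq ?_)
      (eVariationOn.sum_le (f := γ) (n := n) (u := fun i => t (min i n))
        (fun p q pq => ht (min_le_min pq le_rfl)) hmem)
    refine Finset.sum_congr rfl fun i hi => ?_
    have hi' := Finset.mem_range.mp hi
    show ENNReal.ofReal ‖γ (t (i + 1)) - γ (t i)‖ = edist (γ (t (min (i + 1) n))) (γ (t (min i n)))
    rw [min_eq_left (by omega : i + 1 ≤ n), min_eq_left (by omega : i ≤ n), hterm]
  · refine iSup_le ?_
    rintro ⟨n, u, hu, us⟩
    dsimp only
    classical
    set t : ℕ → ℝ := fun i => if i = 0 then a else if i ≤ n + 1 then u (i - 1) else b with htdef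
    have ht : Monotone t := by
      refine monotone_nat_of_le_succ fun i => ?_
      rcases Nat.eq_zero_or_pos i with rfl | hi
      · show t 0 ≤ t 1
        have e1 : t 0 = a := by simp [t]
        have e2 : t 1 = u 0 := by
          simp only [t]
          rw [if_neg (by omega : ¬ (1:ℕ) = 0), if_pos (by omega : 1 ≤ n + 1)]
        rw [e1, e2]; exact (us 0).1
      · show t i ≤ t (i + 1)
        have e1 : t i = if i ≤ n + 1 then u (i - 1) else b := by
          simp only [t]; rw [if_neg (by omega : ¬ i = 0)]
        have e2 : t (i + 1) = if i + 1 ≤ n + 1 then u i else b := by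
          simp only [t, Nat.add_sub_cancel]; rw [if_neg (by omega : ¬ i + 1 = 0)]
        rw [e1, e2]
        by_cases h1 : i + 1 ≤ n + 1
        · rw [if_pos (by omega : i ≤ n + 1), if_pos h1]
          exact hu (by omega)
        · rw [if_neg h1]
          by_cases h2 : i ≤ n + 1
          · rw [if_pos h2]; exact (us _).2
          · rw [if_neg h2]
    have ht0 : t 0 = a := by simp [t]
    have htn : t (n + 2) = b := by simp only [t]; rw [if_neg (by omega), if_neg (by omega)]
    refine le_iSup_of_le (n + 2) (le_iSup_of_le ⟨t, ht, ht0, htn⟩ ?_)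
    dsimp only
    have key : ∑ i ∈ Finset.range n, edist (γ (u (i + 1))) (γ (u i))
        = ∑ i ∈ Finset.Ico 1 (n + 1), ENNReal.ofReal ‖γ (t (i + 1)) - γ (t i)‖ := by
      rw [Finset.sum_Ico_eq_sum_range]
      simp only [Nat.add_sub_cancel]
      refine Finset.sum_congr rfl fun i hi => ?_
      have hi' := Finset.mem_range.mp hi
      have e1 : t (1 + i + 1) = u (i + 1) := by
        simp only [t]; rw [if_neg (by omega), if_pos (by omega)]
        congr 1; omega
      have e2 : t (1 + i) = u i := by
        simp only [t]; rw [if_neg (by omega), if_pos (by omega)]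
        congr 1; omega
      rw [e1, e2, hterm]
    rw [key]
    exact Finset.sum_le_sum_of_subset (by intro i hi; simp at hi ⊢; omega)

set_option maxHeartbeats 2000000 in
private lemma exists_approach {d : ℕ} {Θ : Set (EuclideanSpace ℝ (Fin d))}
    (hd : Dense Θᶜ)
    (h : ∀ x ∉ Θ, ∀ y ∉ Θ, ∀ δ : ℝ, 0 < δ →
      ∃ (a b : ℝ) (γ : ℝ → EuclideanSpace ℝ (Fin d)),
        a < b ∧ ContinuousOn γ (Set.Icc a b) ∧ γ a = x ∧ γ b = y ∧
        pathLen γ a b < ENNReal.ofReal (‖y - x‖ + δ) ∧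
        γ '' Set.Icc a b ∩ Θ = ∅)
    (x : EuclideanSpace ℝ (Fin d)) {ε : ℝ} (hε : 0 < ε) :
    ∃ (x' : EuclideanSpace ℝ (Fin d)) (α : ℝ → EuclideanSpace ℝ (Fin d)),
      x' ∉ Θ ∧ ContinuousOn α (Icc 0 1) ∧ α 0 = x ∧ α 1 = x' ∧
      dist x' x ≤ ε ∧ eVariationOn α (Icc 0 1) ≤ ENNReal.ofReal ε ∧
      ∀ t ∈ Ioc (0:ℝ) 1, α t ∉ Θ := by
  classical
  set ε' := ε / 2 with hε'def
  have hε' : 0 < ε' := by positivity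
  -- points approximating x from outside Θ
  have hds : ∀ n : ℕ, ∃ z : EuclideanSpace ℝ (Fin d), dist z x < ε' * (1/2) ^ (n + 2) ∧ z ∉ Θ := by
    intro n
    obtain ⟨z, hz1, hz2⟩ := Metric.dense_iff.mp hd x (ε' * (1/2) ^ (n + 2)) (by positivity)
    exact ⟨z, by simpa [Metric.mem_ball] using hz1, hz2⟩
  choose xs hxs1 hxs2 using hds
  -- connecting paths
  choose A B g hAB cont ga gb len img using
    fun n : ℕ => h (xs (n + 1)) (hxs2 _) (xs n) (hxs2 _) (ε' * (1/2) ^ (n + 3)) (by positivity)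
  -- basic facts about powers of 1/2
  have hp : ∀ n : ℕ, (0:ℝ) < (1/2) ^ n := fun n => by positivity
  have hp1 : ∀ n : ℕ, (1/2:ℝ) ^ n ≤ 1 := fun n => pow_le_one₀ (by norm_num) (by norm_num)
  have hhalf : ∀ n : ℕ, (1/2:ℝ) ^ (n + 1) < (1/2) ^ n := by
    intro n; rw [pow_succ]; nlinarith [hp n]
  have hpow_lt : ∀ p q : ℕ, (1/2:ℝ) ^ p < (1/2) ^ q ↔ q < p :=
    fun p q => pow_lt_pow_iff_right_of_lt_one₀ (by norm_num) (by norm_num)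
  -- length bound on each connecting path
  have lenL : ∀ n : ℕ, eVariationOn (g n) (Icc (A n) (B n))
      ≤ ENNReal.ofReal (ε' * (1/2) ^ (n + 1)) := by
    intro n
    rw [← pathLen_eq (g n) (hAB n).le]
    refine (len n).le.trans (ENNReal.ofReal_le_ofReal ?_)
    have t1 := hxs1 n
    have t2 := hxs1 (n + 1)
    have tri : dist (xs n) (xs (n + 1)) ≤ dist (xs n) x + dist (xs (n + 1)) x :=
      dist_triangle_right _ _ _
    have hnorm : ‖xs n - xs (n + 1)‖ = dist (xs n) (xs (n + 1)) := (dist_eq_norm _ _).symm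
    have e1 : (1/2:ℝ) ^ (n + 2) = (1/2) ^ (n + 1) * (1/2) := pow_succ _ _
    have e2 : (1/2:ℝ) ^ (n + 3) = (1/2) ^ (n + 1) * (1/2) * (1/2) := by
      rw [pow_succ, pow_succ]
    nlinarith [hp (n + 1), hε'.le]
  -- the reparametrized pieces
  set φ : ℕ → ℝ → ℝ := fun n => affJ (A n) (B n) ((1/2) ^ (n + 1)) ((1/2) ^ n) with hφdef
  set pc : ℕ → ℝ → EuclideanSpace ℝ (Fin d) := fun n => g n ∘ φ n with hpcdef
  have pcl : ∀ n, pc n ((1/2) ^ (n + 1)) = xs (n + 1) := by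
    intro n
    show g n (affJ _ _ _ _ ((1/2) ^ (n + 1))) = xs (n + 1)
    rw [affJ_left, ga]
  have pcr : ∀ n, pc n ((1/2) ^ n) = xs n := by
    intro n
    show g n (affJ _ _ _ _ ((1/2) ^ n)) = xs n
    rw [affJ_right (ne_of_lt (hhalf n)), gb]
  have pcvar : ∀ n, eVariationOn (pc n) (Icc ((1/2) ^ (n + 1)) ((1/2) ^ n))
      ≤ ENNReal.ofReal (ε' * (1/2) ^ (n + 1)) := by
    intro n
    rw [show pc n = g n ∘ φ n from rfl, hφdef, affJ_eVar (g n) (hAB n) (hhalf n)]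
    exact lenL n
  have pccont : ∀ n, ContinuousOn (pc n) (Icc ((1/2) ^ (n + 1)) ((1/2) ^ n)) := fun n =>
    affJ_contOn (g n) (hAB n) (hhalf n) (cont n)
  have pcnot : ∀ n, ∀ t ∈ Icc ((1/2:ℝ) ^ (n + 1)) ((1/2) ^ n), pc n t ∉ Θ := by
    intro n t ht hmem
    have himg : pc n t ∈ g n '' Icc (A n) (B n) := by
      rw [← affJ_image_comp (g n) (hAB n) (hhalf n)]
      exact mem_image_of_mem _ ht
    have : pc n t ∈ g n '' Icc (A n) (B n) ∩ Θ := ⟨himg, hmem⟩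
    rw [img n] at this
    exact this
  -- the index function and α
  have exm : ∀ t : ℝ, 0 < t → ∃ m : ℕ, (1/2:ℝ) ^ m < t := fun t ht =>
    exists_pow_lt_of_lt_one ht (by norm_num)
  set α : ℝ → EuclideanSpace ℝ (Fin d) := fun t => if ht : 0 < t then pc (Nat.find (exm t ht) - 1) t else x with hαdef
  have α0 : α 0 = x := by simp [α]
  -- identification of α with the pieces
  have αeq : ∀ t (ht : 0 < t), t ≤ 1 → ∀ m : ℕ, (1/2:ℝ) ^ (m + 1) < t → t ≤ (1/2) ^ m →
      α t = pc m t := by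
    intro t ht ht1 m hm1 hm2
    have hN := Nat.find_spec (exm t ht)
    set N := Nat.find (exm t ht) with hNdef
    have hN1 : 1 ≤ N := by
      rcases Nat.eq_zero_or_pos N with h0 | h; swap; · exact h
      rw [h0, pow_zero] at hN; linarith
    have hNle : t ≤ (1/2:ℝ) ^ (N - 1) :=
      not_lt.mp (Nat.find_min (exm t ht) (by omega : N - 1 < N))
    have hgt : m < N := (hpow_lt N m).mp (lt_of_lt_of_le hN hm2)
    have hlt : N - 1 < m + 1 := (hpow_lt (m + 1) (N - 1)).mp (lt_of_lt_of_le hm1 hNle)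
    have : N - 1 = m := by omega
    show (if ht : 0 < t then pc (Nat.find (exm t ht) - 1) t else x) = pc m t
    rw [dif_pos ht, ← hNdef, this]
  have αeqOn : ∀ m : ℕ, EqOn α (pc m) (Icc ((1/2) ^ (m + 1)) ((1/2) ^ m)) := by
    intro m t ht
    have ht0 : 0 < t := lt_of_lt_of_le (hp (m + 1)) ht.1
    have ht1 : t ≤ 1 := ht.2.trans (hp1 m)
    rcases eq_or_lt_of_le ht.1 with he | hlt
    · -- t is the left endpoint: α t = pc (m+1) t = xs (m+1) = pc m t
      have e1 : α t = pc (m + 1) t := by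
        refine αeq t ht0 ht1 (m + 1) ?_ ?_
        · rw [← he]; exact hhalf (m + 1)
        · rw [← he]
      rw [e1, ← he, pcl, ← pcr (m + 1)]
    · exact αeq t ht0 ht1 m hlt ht.2
  -- key decomposition fact for positive t ≤ 1
  have αdec : ∀ t, 0 < t → t ≤ 1 → ∃ m : ℕ, (1/2:ℝ) ^ (m + 1) < t ∧ t ≤ (1/2) ^ m ∧
      α t = pc m t := by
    intro t ht ht1
    have hN := Nat.find_spec (exm t ht)
    set N := Nat.find (exm t ht) with hNdef
    have hN1 : 1 ≤ N := by
      rcases Nat.eq_zero_or_pos N with h0 | h; swap; · exact h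
      rw [h0, pow_zero] at hN; linarith
    have hNle : t ≤ (1/2:ℝ) ^ (N - 1) :=
      not_lt.mp (Nat.find_min (exm t ht) (by omega : N - 1 < N))
    refine ⟨N - 1, ?_, hNle, αeq t ht ht1 (N - 1) ?_ hNle⟩
    · rw [show N - 1 + 1 = N by omega]; exact hN
    · rw [show N - 1 + 1 = N by omega]; exact hN
  -- distance estimate
  have αest : ∀ t, 0 < t → t ≤ 1 → ∃ m : ℕ, (1/2:ℝ) ^ (m + 1) < t ∧ t ≤ (1/2) ^ m ∧
      α t = pc m t ∧ edist x (α t) ≤ ENNReal.ofReal (ε' * (1/2) ^ m) := by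
    intro t ht ht1
    obtain ⟨m, hm1, hm2, hm3⟩ := αdec t ht ht1
    refine ⟨m, hm1, hm2, hm3, ?_⟩
    have d1 : edist x (xs m) ≤ ENNReal.ofReal (ε' * (1/2) ^ (m + 2)) := by
      rw [edist_dist]
      exact ENNReal.ofReal_le_ofReal (by rw [dist_comm]; exact (hxs1 m).le)
    have d2 : edist (xs m) (α t) ≤ ENNReal.ofReal (ε' * (1/2) ^ (m + 1)) := by
      rw [hm3, ← pcr m]
      exact (eVariationOn.edist_le (pc m) (mem_Icc.mpr ⟨(hhalf m).le, le_rfl⟩)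
        (mem_Icc.mpr ⟨hm1.le, hm2⟩)).trans (pcvar m)
    calc edist x (α t) ≤ edist x (xs m) + edist (xs m) (α t) := edist_triangle _ _ _
      _ ≤ ENNReal.ofReal (ε' * (1/2) ^ (m + 2)) + ENNReal.ofReal (ε' * (1/2) ^ (m + 1)) :=
          add_le_add d1 d2
      _ = ENNReal.ofReal (ε' * (1/2) ^ (m + 2) + ε' * (1/2) ^ (m + 1)) :=
          (ENNReal.ofReal_add (by positivity) (by positivity)).symm
      _ ≤ ENNReal.ofReal (ε' * (1/2) ^ m) := ENNReal.ofReal_le_ofReal (by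
          have e1 : (1/2:ℝ) ^ (m + 1) = (1/2) ^ m * (1/2) := pow_succ _ _
          have e2 : (1/2:ℝ) ^ (m + 2) = (1/2) ^ m * (1/2) * (1/2) := by rw [pow_succ, pow_succ]
          nlinarith [hp m, hε'.le])
  -- variation on tails
  have Svar : ∀ m : ℕ, eVariationOn α (Icc ((1/2) ^ (m + 1)) 1)
      ≤ ENNReal.ofReal (ε' * (1 - (1/2) ^ (m + 1))) := by
    intro m
    induction m with
    | zero =>
      have e : Icc ((1/2:ℝ) ^ (0 + 1)) 1 = Icc ((1/2:ℝ) ^ (0 + 1)) ((1/2) ^ 0) := by norm_num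
      rw [e, eVariationOn.eq_of_eqOn (αeqOn 0)]
      exact (pcvar 0).trans (ENNReal.ofReal_le_ofReal (by norm_num))
    | succ m ih =>
      rw [← icc_add α (hhalf (m + 1)).le (hp1 (m + 1))]
      calc eVariationOn α (Icc ((1/2) ^ (m + 1 + 1)) ((1/2) ^ (m + 1)))
            + eVariationOn α (Icc ((1/2) ^ (m + 1)) 1)
          ≤ ENNReal.ofReal (ε' * (1/2) ^ (m + 1 + 1))
            + ENNReal.ofReal (ε' * (1 - (1/2) ^ (m + 1))) := by
            refine add_le_add ?_ ih
            rw [eVariationOn.eq_of_eqOn (αeqOn (m + 1))]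
            exact pcvar (m + 1)
        _ = ENNReal.ofReal (ε' * (1/2) ^ (m + 1 + 1) + ε' * (1 - (1/2) ^ (m + 1))) :=
            (ENNReal.ofReal_add (by positivity) (by nlinarith [hp1 (m + 1), hε'.le])).symm
        _ ≤ ENNReal.ofReal (ε' * (1 - (1/2) ^ (m + 1 + 1))) :=
            ENNReal.ofReal_le_ofReal (le_of_eq (by rw [pow_succ (1/2:ℝ) (m + 1)]; ring))
  -- continuity away from 0
  have glue : ∀ m : ℕ, ContinuousOn α (Icc ((1/2) ^ (m + 1)) 1) := by
    intro m
    induction m with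
    | zero =>
      have e : Icc ((1/2:ℝ) ^ (0 + 1)) 1 = Icc ((1/2:ℝ) ^ (0 + 1)) ((1/2) ^ 0) := by norm_num
      rw [e]
      exact (pccont 0).congr (αeqOn 0)
    | succ m ih =>
      have e : Icc ((1/2:ℝ) ^ (m + 1 + 1)) 1
          = Icc ((1/2:ℝ) ^ (m + 1 + 1)) ((1/2) ^ (m + 1)) ∪ Icc ((1/2) ^ (m + 1)) 1 :=
        (Icc_union_Icc_eq_Icc (hhalf (m + 1)).le (hp1 (m + 1))).symm
      rw [e]
      exact continuousOn_union_closed isClosed_Icc isClosed_Icc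
        ((pccont (m + 1)).congr (αeqOn (m + 1))) ih
  -- full continuity
  have contα : ContinuousOn α (Icc 0 1) := by
    intro t ht
    rcases eq_or_lt_of_le ht.1 with h0 | h0
    · rw [← h0]
      rw [Metric.continuousWithinAt_iff]
      intro r hr
      refine ⟨r / (2 * ε' + 1), by positivity, ?_⟩
      intro s hs hds
      rcases eq_or_lt_of_le hs.1 with hs0 | hs0
      · rw [← hs0, α0]
        simpa using hr
      · obtain ⟨m, hm1, hm2, _, hm4⟩ := αest s hs0 hs.2
        have hd1 : dist x (α s) ≤ ε' * (1/2) ^ m := (edist_le_ofReal (by positivity)).mp hm4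
        have hs' : dist s 0 = s := by rw [Real.dist_eq, sub_zero, abs_of_pos hs0]
        rw [hs'] at hds
        have hlt : (1/2:ℝ) ^ m < 2 * s := by
          have := pow_succ (1/2:ℝ) m
          nlinarith
        have h2 : ε' * (1/2) ^ m ≤ ε' * (2 * s) := mul_le_mul_of_nonneg_left hlt.le hε'.le
        calc dist (α s) (α 0) = dist x (α s) := by rw [α0, dist_comm]
          _ ≤ ε' * (1/2) ^ m := hd1
          _ < r := by
            have h3 : s * (2 * ε' + 1) < r := (lt_div_iff₀ (by positivity)).mp hds
            nlinarith
    · obtain ⟨m, hm⟩ := exm t h0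
      refine ((glue m) t (mem_Icc.mpr ⟨((hhalf m).trans hm).le, ht.2⟩)).mono_of_mem_nhdsWithin ?_
      rw [mem_nhdsWithin]
      exact ⟨Ioi ((1/2) ^ (m + 1)), isOpen_Ioi, (hhalf m).trans hm,
        fun s hs => mem_Icc.mpr ⟨hs.1.le, hs.2.2⟩⟩
  -- total variation
  have varα : eVariationOn α (Icc 0 1) ≤ ENNReal.ofReal ε := by
    have hC : ∀ t ∈ Ioc (0:ℝ) 1, edist (α 0) (α t) ≤ ENNReal.ofReal ε' := by
      intro t ht
      obtain ⟨m, _, _, _, hm4⟩ := αest t ht.1 ht.2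
      rw [α0]
      exact hm4.trans (ENNReal.ofReal_le_ofReal (mul_le_of_le_one_right hε'.le (hp1 m)))
    have hS : ∀ s ∈ Ioc (0:ℝ) 1, eVariationOn α (Icc s 1) ≤ ENNReal.ofReal ε' := by
      intro s hs
      obtain ⟨m, hm1, _, _, _⟩ := αest s hs.1 hs.2
      refine le_trans (eVariationOn.mono α (Icc_subset_Icc_left hm1.le))
        ((Svar m).trans (ENNReal.ofReal_le_ofReal ?_))
      nlinarith [hp (m + 1), hε'.le]
    calc eVariationOn α (Icc 0 1) ≤ ENNReal.ofReal ε' + ENNReal.ofReal ε' :=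
        evar_le_add α _ _ hC hS
      _ = ENNReal.ofReal (ε' + ε') := (ENNReal.ofReal_add hε'.le hε'.le).symm
      _ ≤ ENNReal.ofReal ε := le_of_eq (by rw [hε'def]; congr 1; ring)
  -- endpoint
  have α1 : α 1 = xs 0 := by
    have h1 : α 1 = pc 0 1 := αeqOn 0 (mem_Icc.mpr ⟨by norm_num, by norm_num⟩)
    have h2 := pcr 0
    rw [pow_zero] at h2
    rw [h1, h2]
  have αnot : ∀ t ∈ Ioc (0:ℝ) 1, α t ∉ Θ := by
    intro t ht
    obtain ⟨m, hm1, hm2, hm3, _⟩ := αest t ht.1 ht.2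
    rw [hm3]
    exact pcnot m t (mem_Icc.mpr ⟨hm1.le, hm2⟩)
  refine ⟨xs 0, α, hxs2 0, contα, α0, α1, ?_, varα, αnot⟩
  refine (hxs1 0).le.trans ?_
  rw [hε'def]
  norm_num
  linarith

set_option maxHeartbeats 1000000 in
/-- If `Θ` has empty interior and any two points of the complement of `Θ` can be joined by
short paths avoiding `Θ`, then `Θ` is null permeable. -/
theorem nullPermeable_of_paths_outside {d : ℕ} (Θ : Set (EuclideanSpace ℝ (Fin d)))
    (hint : interior Θ = ∅)
    (h : ∀ x ∉ Θ, ∀ y ∉ Θ, ∀ δ : ℝ, 0 < δ →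
      ∃ (a b : ℝ) (γ : ℝ → EuclideanSpace ℝ (Fin d)),
        a < b ∧ ContinuousOn γ (Set.Icc a b) ∧ γ a = x ∧ γ b = y ∧
        pathLen γ a b < ENNReal.ofReal (‖y - x‖ + δ) ∧
        γ '' Set.Icc a b ∩ Θ = ∅) :
    NullPermeable Θ := by
  intro x y δ hδ
  have hd : Dense Θᶜ := interior_eq_empty_iff_dense_compl.mp hint
  have hε0 : 0 < δ / 6 := by positivity
  obtain ⟨x', α, hx'Θ, contα, α0, α1, hdx, varα, αnot⟩ := exists_approach hd h x hε0
  obtain ⟨y', β, hy'Θ, contβ, β0, β1, hdy, varβ, βnot⟩ := exists_approach hd h y hε0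
  obtain ⟨a, b, g, hab, contg, ga, gb, leng, img⟩ := h x' hx'Θ y' hy'Θ (δ / 6) hε0
  set mid : ℝ → EuclideanSpace ℝ (Fin d) := g ∘ affJ a b 1 2 with hmiddef
  set rev : ℝ → EuclideanSpace ℝ (Fin d) := fun t => β (3 - t) with hrevdef
  set γ : ℝ → EuclideanSpace ℝ (Fin d) :=
    fun t => if t ≤ 1 then α t else if t ≤ 2 then mid t else rev t with hγdef
  have h12 : (1:ℝ) < 2 := by norm_num
  have mid1 : mid 1 = x' := by
    show g (affJ a b 1 2 1) = x'
    rw [affJ_left, ga]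
  have mid2 : mid 2 = y' := by
    show g (affJ a b 1 2 2) = y'
    rw [affJ_right (by norm_num), gb]
  have e1 : EqOn γ α (Icc 0 1) := fun t ht => by
    simp only [γ]; rw [if_pos ht.2]
  have e2 : EqOn γ mid (Icc 1 2) := fun t ht => by
    simp only [γ]
    by_cases h1 : t ≤ 1
    · have : t = 1 := le_antisymm h1 ht.1
      rw [if_pos h1, this, α1, mid1]
    · rw [if_neg h1, if_pos ht.2]
  have e3 : EqOn γ rev (Icc 2 3) := fun t ht => by
    simp only [γ]
    have h1 : ¬ t ≤ 1 := by
      have := ht.1; push_neg; linarith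
    by_cases h2 : t ≤ 2
    · have : t = 2 := le_antisymm h2 ht.1
      rw [if_neg h1, if_pos h2, this, mid2]
      show y' = β (3 - 2)
      rw [show (3:ℝ) - 2 = 1 by norm_num, β1]
    · rw [if_neg h1, if_neg h2]
  -- reversal facts
  have hsub : AntitoneOn (fun t : ℝ => 3 - t) (Icc 2 3) := fun s _ t _ hst => by
    simp only; linarith
  have himrev : (fun t : ℝ => 3 - t) '' Icc 2 3 = Icc 0 1 := by
    rw [image_const_sub_Icc]
    norm_num
  have hmaprev : MapsTo (fun t : ℝ => 3 - t) (Icc 2 3) (Icc 0 1) := by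
    rw [← himrev]; exact mapsTo_image _ _
  have hrevcomp : rev = β ∘ (fun t : ℝ => 3 - t) := rfl
  have contrev : ContinuousOn rev (Icc 2 3) := by
    rw [hrevcomp]
    exact contβ.comp (by fun_prop) hmaprev
  have varrev : eVariationOn rev (Icc 2 3) = eVariationOn β (Icc 0 1) := by
    rw [hrevcomp, eVariationOn.comp_eq_of_antitoneOn β _ hsub, himrev]
  have imrev : rev '' Icc 2 3 = β '' Icc 0 1 := by
    rw [hrevcomp, image_comp, himrev]
  -- continuity of γ
  have contγ : ContinuousOn γ (Icc 0 3) := by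
    have c1 : ContinuousOn γ (Icc 0 1) := contα.congr e1
    have c2 : ContinuousOn γ (Icc 1 2) := (affJ_contOn g hab h12 contg).congr e2
    have c3 : ContinuousOn γ (Icc 2 3) := contrev.congr e3
    have u1 : Icc (0:ℝ) 2 = Icc 0 1 ∪ Icc 1 2 := (Icc_union_Icc_eq_Icc (by norm_num) (by norm_num)).symm
    have u2 : Icc (0:ℝ) 3 = Icc 0 2 ∪ Icc 2 3 := (Icc_union_Icc_eq_Icc (by norm_num) (by norm_num)).symm
    rw [u2, u1]
    exact continuousOn_union_closed (isClosed_Icc.union isClosed_Icc) isClosed_Icc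
      (continuousOn_union_closed isClosed_Icc isClosed_Icc c1 c2) c3
  -- endpoints
  have γ0 : γ 0 = x := by rw [e1 (mem_Icc.mpr ⟨le_refl 0, by norm_num⟩), α0]
  have γ3 : γ 3 = y := by
    rw [e3 (mem_Icc.mpr ⟨by norm_num, le_refl 3⟩)]
    show β (3 - 3) = y
    rw [show (3:ℝ) - 3 = 0 by norm_num, β0]
  -- length
  have hlen : pathLen γ 0 3 ≤ ENNReal.ofReal (‖y - x‖ + δ) := by
    rw [pathLen_eq γ (by norm_num : (0:ℝ) ≤ 3)]
    rw [← icc_add γ (by norm_num : (0:ℝ) ≤ 2) (by norm_num : (2:ℝ) ≤ 3),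
      ← icc_add γ (by norm_num : (0:ℝ) ≤ 1) (by norm_num : (1:ℝ) ≤ 2)]
    have v1 : eVariationOn γ (Icc 0 1) ≤ ENNReal.ofReal (δ / 6) := by
      rw [eVariationOn.eq_of_eqOn e1]; exact varα
    have v2 : eVariationOn γ (Icc 1 2) ≤ ENNReal.ofReal (‖y' - x'‖ + δ / 6) := by
      rw [eVariationOn.eq_of_eqOn e2]
      show eVariationOn (g ∘ affJ a b 1 2) (Icc 1 2) ≤ _
      rw [affJ_eVar g hab h12, ← pathLen_eq g hab.le]
      exact leng.le
    have v3 : eVariationOn γ (Icc 2 3) ≤ ENNReal.ofReal (δ / 6) := by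
      rw [eVariationOn.eq_of_eqOn e3, varrev]; exact varβ
    have hyx : ‖y' - x'‖ ≤ ‖y - x‖ + (δ / 6 + δ / 6) := by
      have t1 : dist y' x' ≤ dist y' y + dist y x + dist x x' := dist_triangle4 y' y x x'
      rw [dist_comm x x'] at t1
      rw [← dist_eq_norm, ← dist_eq_norm]
      linarith [hdx, hdy]
    calc eVariationOn γ (Icc 0 1) + eVariationOn γ (Icc 1 2) + eVariationOn γ (Icc 2 3)
        ≤ ENNReal.ofReal (δ / 6) + ENNReal.ofReal (‖y' - x'‖ + δ / 6) + ENNReal.ofReal (δ / 6) :=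
          add_le_add (add_le_add v1 v2) v3
      _ = ENNReal.ofReal (δ / 6 + (‖y' - x'‖ + δ / 6) + δ / 6) := by
          rw [← ENNReal.ofReal_add (by positivity) (by positivity),
            ← ENNReal.ofReal_add (by positivity) (by positivity)]
      _ ≤ ENNReal.ofReal (‖y - x‖ + δ) := ENNReal.ofReal_le_ofReal (by
          have hn := norm_nonneg (y - x)
          linarith)
  -- image condition
  have himg : γ '' Icc 0 3 ∩ Θ ⊆ {x, y} := by
    rintro p ⟨⟨t, ht, rfl⟩, hpΘ⟩
    by_cases h1 : t ≤ 1
    · have htm : t ∈ Icc (0:ℝ) 1 := mem_Icc.mpr ⟨ht.1, h1⟩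
      rcases eq_or_lt_of_le ht.1 with h0 | h0
      · left
        rw [← h0] at htm ⊢
        rw [e1 htm, α0]
      · exfalso
        rw [e1 htm] at hpΘ
        exact αnot t (mem_Ioc.mpr ⟨h0, h1⟩) hpΘ
    · by_cases h2 : t ≤ 2
      · exfalso
        have htm : t ∈ Icc (1:ℝ) 2 := mem_Icc.mpr ⟨le_of_not_ge h1, h2⟩
        rw [e2 htm] at hpΘ
        have : mid t ∈ g '' Icc a b := by
          rw [hmiddef, ← affJ_image_comp g hab h12]
          exact mem_image_of_mem _ htm
        have : mid t ∈ g '' Icc a b ∩ Θ := ⟨this, hpΘ⟩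
        rw [img] at this
        exact this
      · have htm : t ∈ Icc (2:ℝ) 3 := mem_Icc.mpr ⟨le_of_not_ge h2, ht.2⟩
        rcases eq_or_lt_of_le htm.2 with h3 | h3
        · right
          rw [h3] at htm ⊢
          rw [e3 htm]
          show β (3 - 3) = y
          rw [show (3:ℝ) - 3 = 0 by norm_num, β0]
        · exfalso
          rw [e3 htm] at hpΘ
          have : (3 - t) ∈ Ioc (0:ℝ) 1 := mem_Ioc.mpr ⟨by linarith, by linarith [le_of_not_ge h1]⟩
          exact βnot (3 - t) this hpΘ
  exact ⟨0, 3, γ, by norm_num, contγ, γ0, γ3, hlen, himg⟩
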